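/- arXiv:1702.01374 — 2 statements merged into one kernel-verified Lean document; each statement's English description precedes it below -/
import Mathlib

section
/- For any integer n ≥ 1 and any rational (or real) x, the binomial coefficient satisfies: C(x, n) = Σ_{i=1}^{n} (-1)^{i+1} · C(x-n+i, i) · C(x, n-i) · C(n, i) / C(2n-1, i), where C denotes the generalized binomial coefficient. -/
/-- Generalized binomial coefficient `C(x, k) = x(x-1)⋯(x-k+1)/k!` for rational `x`. -/
noncomputable def gchoose (x : ℚ) (k : ℕ) : ℚ :=
  (∏ i ∈ Finset.range k, (x - i)) / (Nat.factorial k)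

lemma prod_range_cast_eq_descFactorial (m k : ℕ) :
    (∏ i ∈ Finset.range k, ((m : ℚ) - i)) = (m.descFactorial k : ℚ) := by
  induction k with
  | zero => simp
  | succ k ih =>
    rw [Finset.prod_range_succ, ih, Nat.descFactorial_succ]
    rcases lt_or_ge k m with h | h
    · push_cast [Nat.cast_sub h.le]
      ring
    · have h0 : (m.descFactorial k : ℚ) = 0 ∨ ((m : ℚ) - k) = 0 := by
        rcases lt_or_eq_of_le h with h' | h'
        · left
          norm_cast
          exact Nat.descFactorial_eq_zero_iff_lt.mpr h'
        · right
          rw [h']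
          ring
      have hms : m - k = 0 := by omega
      rcases h0 with h0 | h0 <;> simp [h0, hms]

lemma gchoose_natCast (m k : ℕ) : gchoose (m : ℚ) k = m.choose k := by
  unfold gchoose
  rw [prod_range_cast_eq_descFactorial, Nat.descFactorial_eq_factorial_mul_choose]
  have hkf : (k.factorial : ℚ) ≠ 0 := by positivity
  push_cast
  field_simp

lemma gchoose_mul (n j : ℕ) (hj : j ≤ n) (x : ℚ) :
    gchoose (x - n + j) j * gchoose x (n - j) = gchoose x n * (n.choose j : ℚ) := by
  unfold gchoose
  have hsplit : (∏ i ∈ Finset.range n, (x - i)) =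
      (∏ i ∈ Finset.range (n - j), (x - i)) *
        (∏ i ∈ Finset.range j, (x - ((n - j + i : ℕ) : ℚ))) := by
    have h := Finset.prod_range_add (fun i => x - (i : ℚ)) (n - j) j
    rw [show n - j + j = n from by omega] at h
    exact h
  have hA : (∏ i ∈ Finset.range j, (x - n + j - i)) =
      (∏ i ∈ Finset.range j, (x - ((n - j + i : ℕ) : ℚ))) := by
    apply Finset.prod_congr rfl
    intro i _
    push_cast [Nat.cast_sub hj]
    ring
  rw [Nat.cast_choose ℚ hj, hsplit, ← hA]
  have h1 : (j.factorial : ℚ) ≠ 0 := by positivity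
  have h2 : ((n - j).factorial : ℚ) ≠ 0 := by positivity
  have h3 : (n.factorial : ℚ) ≠ 0 := by positivity
  field_simp

lemma choose_ne_zero_q (m k : ℕ) (h : k ≤ m) : ((m.choose k : ℚ)) ≠ 0 := by
  exact_mod_cast (Nat.choose_pos h).ne'

lemma key_identity (m k : ℕ) (hk : k ≤ m) :
    (((m + 1).choose (k + 1) : ℚ))^2 / ((2 * m + 1).choose (k + 1)) =
      ((m.choose k : ℚ))^2 / ((2 * m + 1).choose k) +
      ((m.choose (k + 1) : ℚ))^2 / ((2 * m + 1).choose (k + 1)) := by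
  set a : ℚ := (m.choose k : ℚ) with ha
  set b : ℚ := (m.choose (k + 1) : ℚ) with hb
  set P : ℚ := ((2 * m + 1).choose k : ℚ) with hP
  set Q : ℚ := ((2 * m + 1).choose (k + 1) : ℚ) with hQ
  have hc : ((m + 1).choose (k + 1) : ℚ) = a + b := by
    rw [ha, hb]
    norm_cast
  have h1 : b * (k + 1 : ℚ) = a * ((m : ℚ) - k) := by
    have := Nat.choose_succ_right_eq m k
    have hcast : ((m.choose (k+1) * (k+1) : ℕ) : ℚ) = ((m.choose k * (m - k) : ℕ) : ℚ) := by
      exact_mod_cast this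
    push_cast [Nat.cast_sub hk] at hcast
    linarith [hcast]
  have h2 : Q * (k + 1 : ℚ) = P * (2 * (m : ℚ) + 1 - k) := by
    have := Nat.choose_succ_right_eq (2 * m + 1) k
    have hk2 : k ≤ 2 * m + 1 := by omega
    have hcast : (((2*m+1).choose (k+1) * (k+1) : ℕ) : ℚ)
        = (((2*m+1).choose k * (2*m+1 - k) : ℕ) : ℚ) := by
      exact_mod_cast this
    push_cast [Nat.cast_sub hk2] at hcast
    linarith [hcast]
  have hkne : ((k : ℚ) + 1) ≠ 0 := by positivity
  have key1 : (a + 2 * b) * P = a * Q := by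
    apply mul_left_cancel₀ hkne
    linear_combination 2 * P * h1 - a * h2
  have hPne : P ≠ 0 := choose_ne_zero_q _ _ (by omega)
  have hQne : Q ≠ 0 := by
    apply choose_ne_zero_q
    omega
  rw [hc]
  field_simp
  linear_combination a * key1

lemma scalar_sum (m : ℕ) (k : ℕ) (hk : k ≤ m + 1) :
    ∑ i ∈ Finset.Icc 1 k, (-1 : ℚ)^(i+1) * ((m+1).choose i : ℚ)^2 / ((2*m+1).choose i : ℚ)
      = 1 - (-1 : ℚ)^k * (m.choose k : ℚ)^2 / ((2*m+1).choose k : ℚ) := by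
  induction k with
  | zero => simp
  | succ k ih =>
    rw [Finset.sum_Icc_succ_top (by omega : 1 ≤ k + 1), ih (by omega)]
    have hkm : k ≤ m := by omega
    linear_combination ((-1 : ℚ))^k * key_identity m k hkm

theorem stmt1 (n : ℕ) (hn : 1 ≤ n) (x : ℚ) :
    gchoose x n =
      ∑ i ∈ Finset.Icc 1 n, (-1 : ℚ) ^ (i + 1) * gchoose (x - n + i) i *
        gchoose x (n - i) * gchoose (n : ℚ) i / gchoose (2 * (n : ℚ) - 1) i := by
  obtain ⟨m, rfl⟩ : ∃ m, n = m + 1 := ⟨n - 1, by omega⟩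
  have h2n : (2 * ((m + 1 : ℕ) : ℚ) - 1) = ((2 * m + 1 : ℕ) : ℚ) := by push_cast; ring
  have hterm : ∀ i ∈ Finset.Icc 1 (m + 1),
      (-1 : ℚ) ^ (i + 1) * gchoose (x - (m + 1 : ℕ) + i) i *
        gchoose x ((m + 1) - i) * gchoose ((m + 1 : ℕ) : ℚ) i /
        gchoose (2 * ((m + 1 : ℕ) : ℚ) - 1) i
      = gchoose x (m + 1) *
          ((-1 : ℚ)^(i+1) * ((m+1).choose i : ℚ)^2 / ((2*m+1).choose i : ℚ)) := by
    intro i hi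
    simp only [Finset.mem_Icc] at hi
    rw [h2n, gchoose_natCast, gchoose_natCast]
    have hmul := gchoose_mul (m + 1) i hi.2 x
    have : (-1 : ℚ) ^ (i + 1) * gchoose (x - (m + 1 : ℕ) + i) i * gchoose x ((m + 1) - i)
        = (-1 : ℚ) ^ (i + 1) * (gchoose x (m + 1) * ((m+1).choose i : ℚ)) := by
      rw [← hmul]; ring
    rw [mul_assoc ((-1:ℚ)^(i+1)), hmul]
    ring
  rw [Finset.sum_congr rfl hterm, ← Finset.mul_sum,
    scalar_sum m (m + 1) le_rfl]
  simp [Nat.choose_succ_self]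
end

section
/- For every integer h ≥ 1 and rational x, define Q_h(x, z) := Σ_{i=0}^{h} C(x+h, i) · (h!/(h-i)!) · ((2h-1-i)!/(2h-1)!) · z^i as a polynomial in z. Then for h ≥ 3, Q_h satisfies the recurrence Q_h(x,z) = (1 - c_h z)·Q_{h-1}(x,z) - a_h z²·Q_{h-2}(x,z), where c_h = -(1 + 2(h-2)h - x)/((2h-1)(2h-3)) and a_h = -(x-h+2)(x+h-1)/(4(2h-3)²). -/
lemma gchoose_zero (y : ℚ) : gchoose y 0 = 1 := by simp [gchoose]

lemma gchoose_one (y : ℚ) : gchoose y 1 = y := by simp [gchoose]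

lemma gchoose_front (y : ℚ) (m : ℕ) :
    gchoose y (m+1) = y * (∏ i ∈ Finset.range m, (y - 1 - i)) / (Nat.factorial (m+1)) := by
  unfold gchoose
  rw [Finset.prod_range_succ']
  congr 1
  rw [mul_comm]
  congr 1
  · simp
  · exact Finset.prod_congr rfl (fun i _ => by push_cast; ring)

lemma gchoose_front2 (y : ℚ) (m : ℕ) :
    gchoose y (m+2) = y * (y - 1) * (∏ i ∈ Finset.range m, (y - 2 - i)) / (Nat.factorial (m+2)) := by
  rw [gchoose_front]
  congr 1
  rw [Finset.prod_range_succ']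
  have : ∏ i ∈ Finset.range m, (y - 1 - (↑(i+1) : ℚ)) = ∏ i ∈ Finset.range m, (y - 2 - ↑i) :=
    Finset.prod_congr rfl (fun i _ => by push_cast; ring)
  rw [this]
  push_cast
  ring

lemma gchoose_fb (y : ℚ) (m : ℕ) :
    gchoose y (m+2) = y * (∏ i ∈ Finset.range m, (y - 1 - i)) * (y - 1 - m) / (Nat.factorial (m+2)) := by
  rw [gchoose_front, Finset.prod_range_succ]
  ring

/-- The denominator convergent polynomial
`Q_h(x, z) = Σ_{i=0}^{h} C(x+h, i) (h!/(h-i)!) ((2h-1-i)!/(2h-1)!) z^i`. -/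
noncomputable def Qpoly (x : ℚ) (h : ℕ) : Polynomial ℚ :=
  ∑ i ∈ Finset.range (h + 1),
    Polynomial.C (gchoose (x + h) i * ((Nat.factorial h : ℚ) / (Nat.factorial (h - i) : ℚ)) *
      ((Nat.factorial (2 * h - 1 - i) : ℚ) / (Nat.factorial (2 * h - 1) : ℚ))) *
      Polynomial.X ^ i

lemma Qpoly_coeff (x : ℚ) (h n : ℕ) :
    (Qpoly x h).coeff n = if n ≤ h then gchoose (x + h) n * ((Nat.factorial h : ℚ) / (Nat.factorial (h - n) : ℚ)) *
      ((Nat.factorial (2 * h - 1 - n) : ℚ) / (Nat.factorial (2 * h - 1) : ℚ)) else 0 := by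
  unfold Qpoly
  rw [Polynomial.finset_sum_coeff]
  simp only [Polynomial.coeff_C_mul, Polynomial.coeff_X_pow, mul_ite, mul_one, mul_zero]
  simp [Finset.sum_ite_eq', Nat.lt_succ_iff, eq_comm]


lemma desc_eq (h n : ℕ) (hn : n ≤ h) :
    ∏ i ∈ Finset.range n, ((h:ℚ) - i) = (Nat.factorial h : ℚ) / (Nat.factorial (h - n) : ℚ) := by
  induction n with
  | zero =>
    have : ((Nat.factorial h : ℕ) : ℚ) ≠ 0 := by positivity
    simp [div_self this]
  | succ n ih =>
    rw [Finset.prod_range_succ, ih (by omega), show h - n = (h - (n+1)) + 1 from by omega,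
      Nat.factorial_succ]
    have hc : ((h:ℚ) - n) = ((h - (n+1) : ℕ) : ℚ) + 1 := by
      rw [Nat.cast_sub (by omega : n+1 ≤ h)]; push_cast; ring
    have hhn : ((h:ℚ) - ↑n) ≠ 0 := by rw [hc]; positivity
    have F : ((Nat.factorial (h - (n + 1)) : ℕ) : ℚ) ≠ 0 := by positivity
    have key : ((h:ℚ) * ↑(Nat.factorial (h - (n+1))) - ↑n * ↑(Nat.factorial (h - (n+1)))) ≠ 0 := by
      have e2 : ((h:ℚ) * ↑(Nat.factorial (h - (n+1))) - ↑n * ↑(Nat.factorial (h - (n+1))))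
          = (↑h - ↑n) * ↑(Nat.factorial (h - (n+1))) := by ring
      rw [e2]; exact mul_ne_zero hhn F
    rw [Nat.cast_mul, hc]
    field_simp [key]
    have w1 : ((h:ℚ) - (↑n + 1) + 1) ≠ 0 := by
      have e3 : ((h:ℚ) - (↑n+1)+1) = ↑h - ↑n := by ring
      rw [e3]; exact hhn
    exact (Nat.cast_succ _).symm

lemma Qpoly_coeff' (x : ℚ) (h n : ℕ) (hn : n ≤ 2*h-1) :
    (Qpoly x h).coeff n = gchoose (x + h) n * ((Nat.factorial n : ℚ) * gchoose ((h:ℕ) : ℚ) n) *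
      ((Nat.factorial (2 * h - 1 - n) : ℚ) / (Nat.factorial (2 * h - 1) : ℚ)) := by
  by_cases hnh : n ≤ h
  · have e : ((Nat.factorial h : ℕ) : ℚ) / ((Nat.factorial (h - n) : ℕ) : ℚ)
        = (Nat.factorial n : ℚ) * gchoose ((h:ℕ) : ℚ) n := by
      rw [← desc_eq h n hnh]
      unfold gchoose
      have : ((Nat.factorial n : ℕ) : ℚ) ≠ 0 := by positivity
      field_simp
    rw [Qpoly_coeff, if_pos hnh, e]
  · rw [Qpoly_coeff, if_neg hnh]
    have : gchoose ((h:ℕ) : ℚ) n = 0 := by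
      unfold gchoose
      rw [Finset.prod_eq_zero (Finset.mem_range.mpr (by omega : h < n)) (by simp)]
      simp
    simp [this]

set_option maxHeartbeats 4000000 in
theorem stmt6 (h : ℕ) (hh : 3 ≤ h) (x : ℚ) :
    Qpoly x h =
      (1 - Polynomial.C (-(1 + 2 * ((h : ℚ) - 2) * (h : ℚ) - x) /
          ((2 * (h : ℚ) - 1) * (2 * (h : ℚ) - 3))) * Polynomial.X) * Qpoly x (h - 1) -
        Polynomial.C (-(x - (h : ℚ) + 2) * (x + (h : ℚ) - 1) / (4 * (2 * (h : ℚ) - 3) ^ 2)) *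
          Polynomial.X ^ 2 * Qpoly x (h - 2) := by
  obtain ⟨k, rfl⟩ : ∃ k, h = k + 3 := ⟨h - 3, by omega⟩
  rw [show k + 3 - 1 = k + 2 from by omega, show k + 3 - 2 = k + 1 from by omega]
  set c : ℚ := -(1 + 2 * (((k+3 : ℕ) : ℚ) - 2) * ((k+3 : ℕ) : ℚ) - x) /
      ((2 * ((k+3 : ℕ) : ℚ) - 1) * (2 * ((k+3 : ℕ) : ℚ) - 3)) with hc
  set a : ℚ := -(x - ((k+3 : ℕ) : ℚ) + 2) * (x + ((k+3 : ℕ) : ℚ) - 1) /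
      (4 * (2 * ((k+3 : ℕ) : ℚ) - 3) ^ 2) with ha
  ext n
  simp only [Polynomial.coeff_sub, sub_mul, one_mul, mul_assoc, Polynomial.coeff_C_mul, pow_two]
  match n with
  | 0 =>
    simp only [Polynomial.mul_coeff_zero, Polynomial.coeff_X_zero, zero_mul, mul_zero, sub_zero]
    rw [Qpoly_coeff, Qpoly_coeff]
    have f1 : ((k+3).factorial : ℚ) ≠ 0 := by positivity
    have f2 : ((k+2).factorial : ℚ) ≠ 0 := by positivity
    have f3 : ((2*(k+3)-1).factorial : ℚ) ≠ 0 := by positivity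
    have f4 : ((2*(k+2)-1).factorial : ℚ) ≠ 0 := by positivity
    simp [gchoose_zero, div_self, f1, f2, f3, f4]
  | 1 =>
    have A1 : (Polynomial.X * Qpoly x (k+2)).coeff 1 = (Qpoly x (k+2)).coeff 0 := by
      simpa using Polynomial.coeff_X_mul (Qpoly x (k+2)) 0
    have A2 : (Polynomial.X * (Polynomial.X * Qpoly x (k+1))).coeff 1 =
        (Polynomial.X * Qpoly x (k+1)).coeff 0 := by
      simpa using Polynomial.coeff_X_mul (Polynomial.X * Qpoly x (k+1)) 0
    rw [A1, A2]
    simp only [Polynomial.mul_coeff_zero, Polynomial.coeff_X_zero, zero_mul, mul_zero, sub_zero]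
    rw [Qpoly_coeff, Qpoly_coeff, Qpoly_coeff]
    rw [if_pos (by omega : (1:ℕ) ≤ k+3), if_pos (by omega : (1:ℕ) ≤ k+2),
      if_pos (by omega : (0:ℕ) ≤ k+2)]
    simp only [show k+3-1 = k+2 from by omega, show 2*(k+3)-1-1 = 2*k+4 from by omega,
      show 2*(k+3)-1 = 2*k+5 from by omega, show k+2-1 = k+1 from by omega,
      show 2*(k+2)-1-1 = 2*k+2 from by omega, show 2*(k+2)-1 = 2*k+3 from by omega,
      show 2*k+5-1 = 2*k+4 from by omega, show 2*k+3-1 = 2*k+2 from by omega,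
      Nat.sub_zero]
    rw [gchoose_one, gchoose_one, gchoose_zero]
    rw [hc]
    have hk : (0:ℚ) ≤ (k:ℚ) := Nat.cast_nonneg k
    have K : ((Nat.factorial k : ℕ) : ℚ) ≠ 0 := by positivity
    have L : ((Nat.factorial (2*k) : ℕ) : ℚ) ≠ 0 := by positivity
    simp only [show 2*k+5 = 2*k+4+1 from by omega, show 2*k+4 = 2*k+3+1 from by omega,
      show 2*k+3 = 2*k+2+1 from by omega, show 2*k+2 = 2*k+1+1 from by omega,
      show k+3 = k+2+1 from by omega, show k+2 = k+1+1 from by omega,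
      Nat.factorial_succ]
    push_cast
    have d1 : (2*((k:ℚ)+2+1)-1) ≠ 0 := by nlinarith
    have d2 : (2*((k:ℚ)+2+1)-3) ≠ 0 := by nlinarith
    have n1 : ((k:ℚ)+1) ≠ 0 := by positivity
    have n2 : ((k:ℚ)+1+1) ≠ 0 := by positivity
    have n3 : ((k:ℚ)+2+1) ≠ 0 := by positivity
    have m1 : (2*(k:ℚ)+1) ≠ 0 := by positivity
    have m2 : (2*(k:ℚ)+1+1) ≠ 0 := by positivity
    have m3 : (2*(k:ℚ)+2+1) ≠ 0 := by positivity
    have m4 : (2*(k:ℚ)+3+1) ≠ 0 := by positivity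
    have m5 : (2*(k:ℚ)+4+1) ≠ 0 := by positivity
    field_simp [d1, d2, n1, n2, n3, m1, m2, m3, m4, m5, K, L]
    ring
  | (m+2) =>
    simp only [Polynomial.coeff_X_mul]
    by_cases hm : m ≤ k + 1
    · rw [Qpoly_coeff' x (k+3) (m+2) (by omega),
          Qpoly_coeff' x (k+2) (m+2) (by omega),
          Qpoly_coeff' x (k+2) (m+1) (by omega),
          Qpoly_coeff' x (k+1) m (by omega)]
      obtain ⟨j, hj⟩ : ∃ j, m + j = 2*k+1 := ⟨2*k+1-m, by omega⟩
      simp only [show 2*(k+3)-1 = 2*k+5 from by omega, show 2*(k+2)-1 = 2*k+3 from by omega,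
        show 2*(k+1)-1 = 2*k+1 from by omega,
        show 2*k+5-(m+2) = j+2 from by omega, show 2*k+3-(m+2) = j from by omega,
        show 2*k+3-(m+1) = j+1 from by omega, show 2*k+1-m = j from by omega]
      rw [gchoose_front2 (x + ((k+3:ℕ):ℚ)) m, gchoose_front2 (((k+3:ℕ):ℚ)) m,
          gchoose_fb (x + ((k+2:ℕ):ℚ)) m, gchoose_fb (((k+2:ℕ):ℚ)) m,
          gchoose_front (x + ((k+2:ℕ):ℚ)) m, gchoose_front (((k+2:ℕ):ℚ)) m]
      unfold gchoose
      have P1 : (∏ i ∈ Finset.range m, (x + ((k+3:ℕ):ℚ) - 2 - i))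
          = ∏ i ∈ Finset.range m, (x + ((k+1:ℕ):ℚ) - i) :=
        Finset.prod_congr rfl (fun i _ => by push_cast; ring)
      have P2 : (∏ i ∈ Finset.range m, (x + ((k+2:ℕ):ℚ) - 1 - i))
          = ∏ i ∈ Finset.range m, (x + ((k+1:ℕ):ℚ) - i) :=
        Finset.prod_congr rfl (fun i _ => by push_cast; ring)
      have D1 : (∏ i ∈ Finset.range m, (((k+3:ℕ):ℚ) - 2 - i))
          = ∏ i ∈ Finset.range m, (((k+1:ℕ):ℚ) - i) :=
        Finset.prod_congr rfl (fun i _ => by push_cast; ring)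
      have D2 : (∏ i ∈ Finset.range m, (((k+2:ℕ):ℚ) - 1 - i))
          = ∏ i ∈ Finset.range m, (((k+1:ℕ):ℚ) - i) :=
        Finset.prod_congr rfl (fun i _ => by push_cast; ring)
      rw [P1, P2, D1, D2]
      simp only [show m+2 = m+1+1 from rfl, show j+2 = j+1+1 from rfl,
        show 2*k+5 = 2*k+4+1 from by omega, show 2*k+4 = 2*k+3+1 from by omega,
        show 2*k+3 = 2*k+2+1 from by omega, show 2*k+2 = 2*k+1+1 from by omega,
        Nat.factorial_succ]
      rw [hc, ha]
      push_cast
      have hjq : (j:ℚ) = 2*(k:ℚ)+1-(m:ℚ) := by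
        have h5 := congrArg (fun t : ℕ => (t:ℚ)) hj
        push_cast at h5
        linarith
      rw [hjq]
      have hk : (0:ℚ) ≤ (k:ℚ) := Nat.cast_nonneg k
      have hmq : (0:ℚ) ≤ (m:ℚ) := Nat.cast_nonneg m
      have K : ((Nat.factorial m : ℕ):ℚ) ≠ 0 := by positivity
      have L : ((Nat.factorial (2*k) : ℕ):ℚ) ≠ 0 := by positivity
      have Jf : ((Nat.factorial j : ℕ):ℚ) ≠ 0 := by positivity
      have d1 : (2*((k:ℚ)+3)-1) ≠ 0 := by nlinarith
      have d2 : (2*((k:ℚ)+3)-3) ≠ 0 := by nlinarith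
      have d1' : (2*((k:ℚ)+2+1)-1) ≠ 0 := by nlinarith
      have d2' : (2*((k:ℚ)+2+1)-3) ≠ 0 := by nlinarith
      have n1 : ((k:ℚ)+1) ≠ 0 := by positivity
      have n2 : ((k:ℚ)+1+1) ≠ 0 := by positivity
      have n3 : ((k:ℚ)+2+1) ≠ 0 := by positivity
      have m1 : (2*(k:ℚ)+1) ≠ 0 := by positivity
      have m2 : (2*(k:ℚ)+1+1) ≠ 0 := by positivity
      have m3 : (2*(k:ℚ)+2+1) ≠ 0 := by positivity
      have m4 : (2*(k:ℚ)+3+1) ≠ 0 := by positivity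
      have m5 : (2*(k:ℚ)+4+1) ≠ 0 := by positivity
      have q1 : ((m:ℚ)+1) ≠ 0 := by positivity
      have q2 : ((m:ℚ)+1+1) ≠ 0 := by positivity
      have g1 : (((k:ℚ)+3)*2-1) ≠ 0 := by nlinarith
      have g2 : (((k:ℚ)+3)*2-3) ≠ 0 := by nlinarith
      field_simp [d1, d2, d1', d2', n1, n2, n3, m1, m2, m3, m4, m5, q1, q2, K, L, Jf, g1, g2]
      ring
    · rw [Qpoly_coeff, Qpoly_coeff, Qpoly_coeff, Qpoly_coeff,
        if_neg (by omega : ¬ (m+2 ≤ k+3)), if_neg (by omega : ¬ (m+2 ≤ k+2)),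
        if_neg (by omega : ¬ (m+1 ≤ k+2)), if_neg (by omega : ¬ (m ≤ k+1))]
      ring
end
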